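/- Let Y be a principal branch of the infinite ternary tree with root r and origin o. Fix a rotor configuration on Y with the root rotor pointing to o (direction 3). Let c and d be the escape sequences for the induced rotor configurations on the left and right sub-branches of Y, respectively. Then φ(c, d) is the escape sequence for the full branch Y. -/

import Mathlib

/-!
A principal branch `Y` of the infinite ternary tree.

`Y` is rooted at a neighbor `r` of the origin `o` and includes the edge
`(o, r)`, so `r` has degree 3 in `Y` and `o` has degree 1.  Vertices of `Y`
other than `o` are encoded as lists over `Fin 2` (the root `r` is `[]` and
children are obtained by appending a letter: `0` = left, `1` = right); a chip
position is `Option (List (Fin 2))` with `none` standing for `o`.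

Every vertex other than `o` carries a rotor with three directions indexed by
`ZMod 3`: value `0` (direction 1) points to the left child, value `1`
(direction 2) to the right child, and value `2` (direction 3) to the parent
(for `r`, to `o`).  A rotor-router step increments the rotor at the chip's
location, then moves the chip in the new direction.  Chips are started at `o`
one at a time; a chip immediately steps to `r` and then walks until it
returns to `o` (absorbing) or escapes to infinity, rotors persisting between
chips.
-/

/-- Rotor configurations on the branch `Y`. -/
abbrev YConf := List (Fin 2) → ZMod 3

/-- One rotor-router step on `Y`; the origin `o` (= `none`) is absorbing. -/
def ystep (p : YConf × Option (List (Fin 2))) : YConf × Option (List (Fin 2)) :=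
  match p with
  | (C, none) => (C, none)
  | (C, some w) =>
    let r := C w + 1
    let C' := Function.update C w r
    if h : r.val < 2 then (C', some (w ++ [⟨r.val, h⟩]))
    else (C', if w = [] then none else some w.dropLast)

/-- The chip started at `o` (which immediately steps to the root `r`)
eventually returns to `o`. -/
def ychipReturns (C : YConf) : Prop := ∃ k, (ystep^[k] (C, some [])).2 = none

/-- The rotor configuration left behind by one chip started at `o`: each
rotor takes its eventual value along the trajectory (well-defined whether the
chip returns to `o` or escapes to infinity, since in the latter case it
visits each vertex only finitely often). -/
noncomputable def ynextConf (C : YConf) : YConf := fun v =>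
  haveI := Classical.dec (∃ c : ZMod 3, ∃ K : ℕ, ∀ k, K ≤ k → (ystep^[k] (C, some [])).1 v = c)
  if h : ∃ c : ZMod 3, ∃ K : ℕ, ∀ k, K ≤ k → (ystep^[k] (C, some [])).1 v = c then
    h.choose
  else C v

/-- The rotor configuration seen by the `(j+1)`-st chip. -/
noncomputable def yconfSeq (C0 : YConf) : ℕ → YConf
  | 0 => C0
  | j + 1 => ynextConf (yconfSeq C0 j)

/-- The `(j+1)`-st chip (`j = 0, 1, 2, …`) escapes to infinity. -/
def yescapes (C0 : YConf) (j : ℕ) : Prop := ¬ ychipReturns (yconfSeq C0 j)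

/-- The map `φ`: given binary words `c`, `d` of the same length (presented as
a list of pairs), `φ(c, d)` is the concatenation `b₁ ⋯ b_m` where `b_j = 0`
if `(c_j, d_j) = (0,0)`, `b_j = 10` if `(c_j, d_j) = (1,0)` or `(0,1)`, and
`b_j = 110` if `(c_j, d_j) = (1,1)`. -/
def phiWord (l : List (Bool × Bool)) : List Bool :=
  (l.map fun cd =>
    match cd with
    | (false, false) => [false]
    | (true, true) => [true, true, false]
    | _ => [true, false]).flatten

/-! ### Infrastructure -/

def subC (a : Fin 2) (C : YConf) : YConf := fun v => C (a :: v)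

def lift (a : Fin 2) (C D : YConf) : YConf := fun v =>
  match v with
  | [] => C []
  | b :: w => if b = a then D w else C (b :: w)

lemma lift_nil (a : Fin 2) (C D : YConf) : lift a C D [] = C [] := rfl

lemma lift_cons_self (a : Fin 2) (C D : YConf) (w : List (Fin 2)) :
    lift a C D (a :: w) = D w := by simp [lift]

lemma lift_cons_ne {a b : Fin 2} (C D : YConf) (w : List (Fin 2)) (h : b ≠ a) :
    lift a C D (b :: w) = C (b :: w) := by simp [lift, h]

lemma lift_self (a : Fin 2) (C : YConf) : lift a C (subC a C) = C := by
  funext v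
  rcases v with _ | ⟨b, w⟩
  · rfl
  · by_cases hb : b = a
    · subst hb; rw [lift_cons_self]; rfl
    · rw [lift_cons_ne _ _ _ hb]

lemma subC_lift_self (a : Fin 2) (C D : YConf) : subC a (lift a C D) = D := by
  funext w; exact lift_cons_self a C D w

lemma subC_lift_ne {a b : Fin 2} (C D : YConf) (h : b ≠ a) :
    subC b (lift a C D) = subC b C := by
  funext w; exact lift_cons_ne C D w h

lemma subC_update_root (a : Fin 2) (C : YConf) (r : ZMod 3) :
    subC a (Function.update C [] r) = subC a C := by
  funext w; exact Function.update_of_ne (by simp) _ _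

lemma update_lift (a : Fin 2) (C D : YConf) (w : List (Fin 2)) (r : ZMod 3) :
    Function.update (lift a C D) (a :: w) r = lift a C (Function.update D w r) := by
  funext v
  rcases v with _ | ⟨b, w'⟩
  · rw [Function.update_of_ne (by simp)]; rfl
  · by_cases hb : b = a
    · subst hb
      by_cases hw : w' = w
      · subst hw
        rw [Function.update_self, lift_cons_self, Function.update_self]
      · rw [Function.update_of_ne (by simp [hw]), lift_cons_self, lift_cons_self,
          Function.update_of_ne hw]
    · rw [Function.update_of_ne (by simp [hb]), lift_cons_ne _ _ _ hb, lift_cons_ne _ _ _ hb]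

/-! ### `ystep` computation lemmas -/

lemma ystep_lt (C : YConf) (w : List (Fin 2)) (r : ZMod 3) (hr : C w + 1 = r)
    (h : r.val < 2) :
    ystep (C, some w) = (Function.update C w r, some (w ++ [⟨r.val, h⟩])) := by
  subst hr; simp [ystep, h]

lemma ystep_ge_nil (C : YConf) (r : ZMod 3) (hr : C [] + 1 = r) (h : ¬ r.val < 2) :
    ystep (C, some []) = (Function.update C [] r, none) := by
  subst hr; simp [ystep, h]

lemma ystep_ge_cons (C : YConf) (w : List (Fin 2)) (r : ZMod 3) (hw : w ≠ [])
    (hr : C w + 1 = r) (h : ¬ r.val < 2) :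
    ystep (C, some w) = (Function.update C w r, some w.dropLast) := by
  subst hr; simp [ystep, h, hw]

lemma ystep_none (C : YConf) : ystep (C, none) = (C, none) := rfl

lemma step_root (C : YConf) (a : Fin 2) (ha : C [] + 1 = ((a.val : ℕ) : ZMod 3)) :
    ystep (C, some []) = (Function.update C [] ((a.val : ℕ) : ZMod 3), some [a]) := by
  have hv : (((a.val : ℕ) : ZMod 3)).val = a.val :=
    ZMod.val_cast_of_lt (lt_trans a.isLt (by norm_num))
  have h2 : (((a.val : ℕ) : ZMod 3)).val < 2 := by rw [hv]; exact a.isLt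
  have hfa : (⟨((a.val : ℕ) : ZMod 3).val, h2⟩ : Fin 2) = a := Fin.ext hv
  rw [ystep_lt C [] _ ha h2, List.nil_append, hfa]

/-! ### Trajectory basics -/

lemma traj_stab (p : YConf × Option (List (Fin 2))) (E : YConf) (k : ℕ)
    (h : ystep^[k] p = (E, none)) : ∀ m, k ≤ m → ystep^[m] p = (E, none) := by
  have key : ∀ t, ystep^[k + t] p = (E, none) := by
    intro t
    induction t with
    | zero => exact h
    | succ t ih => rw [← Nat.add_assoc, Function.iterate_succ_apply', ih, ystep_none]
  intro m hm
  obtain ⟨t, rfl⟩ := Nat.exists_eq_add_of_le hm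
  exact key t

lemma snd_ne_none_of_later (p : YConf × Option (List (Fin 2))) (k m : ℕ) (hk : k ≤ m)
    (h : (ystep^[m] p).2 ≠ none) : (ystep^[k] p).2 ≠ none := by
  intro hn
  apply h
  have : ystep^[k] p = ((ystep^[k] p).1, none) := Prod.ext rfl hn
  rw [traj_stab p _ k this m hk]

lemma ynextConf_spec (C : YConf) (v : List (Fin 2)) (c : ZMod 3) (K : ℕ)
    (h : ∀ k, K ≤ k → (ystep^[k] (C, some [])).1 v = c) : ynextConf C v = c := by
  have hex : ∃ c' : ZMod 3, ∃ K' : ℕ, ∀ k, K' ≤ k → (ystep^[k] (C, some [])).1 v = c' :=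
    ⟨c, K, h⟩
  unfold ynextConf
  rw [dif_pos hex]
  obtain ⟨K', hK'⟩ := hex.choose_spec
  have h1 := hK' (max K K') (le_max_right _ _)
  have h2 := h (max K K') (le_max_left _ _)
  rw [h2] at h1
  exact h1.symm

lemma ynextConf_of_none (C E : YConf) (k : ℕ) (h : ystep^[k] (C, some []) = (E, none)) :
    ynextConf C = E := by
  funext v
  exact ynextConf_spec C v (E v) k (fun m hm => by rw [traj_stab _ _ _ h m hm])

lemma ynextConf_congr (C D : YConf) (v w : List (Fin 2)) (off : ℕ)
    (h : ∀ k, (ystep^[off + k] (C, some [])).1 v = (ystep^[k] (D, some [])).1 w)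
    (hd : C v = D w) : ynextConf C v = ynextConf D w := by
  by_cases hD : ∃ c : ZMod 3, ∃ K : ℕ, ∀ k, K ≤ k → (ystep^[k] (D, some [])).1 w = c
  · obtain ⟨c, K, hK⟩ := hD
    have hCs : ynextConf C v = c := by
      apply ynextConf_spec C v c (off + K)
      intro k hk
      have hke : k = off + (k - off) := by omega
      rw [hke, h]
      exact hK _ (by omega)
    have hDs : ynextConf D w = c := ynextConf_spec D w c K hK
    rw [hCs, hDs]
  · have hC : ¬ ∃ c : ZMod 3, ∃ K : ℕ, ∀ k, K ≤ k → (ystep^[k] (C, some [])).1 v = c := by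
      rintro ⟨c, K, hK⟩
      exact hD ⟨c, K, fun k hk => by rw [← h k]; exact hK _ (by omega)⟩
    unfold ynextConf
    rw [dif_neg hC, dif_neg hD]
    exact hd

/-! ### Simulation -/

lemma sim_some (a : Fin 2) (C : YConf) :
    ∀ (k : ℕ) (D : YConf) (w : List (Fin 2)),
      ystep^[k] (subC a C, some []) = (D, some w) →
      ystep^[k] (C, some [a]) = (lift a C D, some (a :: w)) := by
  intro k
  induction k with
  | zero =>
    intro D w h
    simp only [Function.iterate_zero_apply, Prod.mk.injEq] at h ⊢
    obtain ⟨rfl, h2⟩ := h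
    obtain rfl : ([] : List (Fin 2)) = w := Option.some.inj h2
    exact ⟨(lift_self a C).symm, rfl⟩
  | succ k ih =>
    intro D w h
    rw [Function.iterate_succ_apply'] at h ⊢
    rcases hq : (ystep^[k] (subC a C, some [])).2 with _ | w'
    · exfalso
      have hp : ystep^[k] (subC a C, some []) = ((ystep^[k] (subC a C, some [])).1, none) :=
        Prod.ext rfl hq
      rw [hp, ystep_none] at h
      exact (Option.some_ne_none w (Prod.mk.inj h).2.symm)
    · have hp : ystep^[k] (subC a C, some []) = ((ystep^[k] (subC a C, some [])).1, some w') :=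
        Prod.ext rfl hq
      set D' := (ystep^[k] (subC a C, some [])).1 with hD'
      rw [ih D' w' hp]
      rw [hp] at h
      by_cases hr : (D' w' + 1).val < 2
      · rw [ystep_lt D' w' _ rfl hr] at h
        obtain ⟨h1, h2⟩ := Prod.mk.inj h
        obtain rfl := Option.some.inj h2
        rw [ystep_lt (lift a C D') (a :: w') (D' w' + 1)
          (by rw [lift_cons_self]) hr, update_lift, h1, List.cons_append]
      · by_cases hw' : w' = []
        · exfalso
          subst hw'
          rw [ystep_ge_nil D' _ rfl hr] at h
          exact (Option.some_ne_none w (Prod.mk.inj h).2.symm)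
        · rw [ystep_ge_cons D' w' _ hw' rfl hr] at h
          obtain ⟨h1, h2⟩ := Prod.mk.inj h
          obtain rfl := Option.some.inj h2
          rw [ystep_ge_cons (lift a C D') (a :: w') (D' w' + 1) (by simp)
            (by rw [lift_cons_self]) hr, update_lift, h1,
            List.dropLast_cons_of_ne_nil hw']

/-! ### Phase lemmas -/

lemma phaseA (C : YConf) (a : Fin 2) (ha : C [] + 1 = ((a.val : ℕ) : ZMod 3))
    (hS : ychipReturns (subC a C)) :
    ∃ (k0 : ℕ) (C' : YConf), ystep^[k0] (C, some []) = (C', some []) ∧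
      C' [] = ((a.val : ℕ) : ZMod 3) ∧ subC a C' = ynextConf (subC a C) ∧
      ∀ b : Fin 2, b ≠ a → subC b C' = subC b C := by
  classical
  have hk1 : (ystep^[Nat.find hS] (subC a C, some [])).2 = none := Nat.find_spec hS
  have hk1ne : Nat.find hS ≠ 0 := by
    intro h0
    rw [h0] at hk1
    simp at hk1
  obtain ⟨k1', hk1'⟩ := Nat.exists_eq_succ_of_ne_zero hk1ne
  have hmin : (ystep^[k1'] (subC a C, some [])).2 ≠ none :=
    Nat.find_min hS (by omega)
  rcases hq : (ystep^[k1'] (subC a C, some [])).2 with _ | w'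
  · exact absurd hq hmin
  set D' := (ystep^[k1'] (subC a C, some [])).1 with hD'
  have hp : ystep^[k1'] (subC a C, some []) = (D', some w') := Prod.ext rfl hq
  have hiter : ystep^[Nat.find hS] (subC a C, some []) = ystep (D', some w') := by
    rw [hk1', Function.iterate_succ_apply', hp]
  have hsnone : (ystep (D', some w')).2 = none := by rw [← hiter]; exact hk1
  by_cases hr : (D' w' + 1).val < 2
  · rw [ystep_lt D' w' _ rfl hr] at hsnone
    simp at hsnone
  by_cases hw' : w' = []
  swap
  · rw [ystep_ge_cons D' w' _ hw' rfl hr] at hsnone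
    simp at hsnone
  subst hw'
  have hfin : ystep^[Nat.find hS] (subC a C, some [])
      = (Function.update D' [] (D' [] + 1), none) := by
    rw [hiter, ystep_ge_nil D' _ rfl hr]
  have hnc : ynextConf (subC a C) = Function.update D' [] (D' [] + 1) :=
    ynextConf_of_none _ _ _ hfin
  set C1 := Function.update C [] ((a.val : ℕ) : ZMod 3) with hC1
  have hroot : ystep (C, some []) = (C1, some [a]) := step_root C a ha
  have hsub1 : subC a C1 = subC a C := subC_update_root a C _
  have hsim : ystep^[k1'] (C1, some [a]) = (lift a C1 D', some [a]) := by
    have := sim_some a C1 k1' D' [] (by rw [hsub1]; exact hp)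
    exact this
  have hstep2 : ystep (lift a C1 D', some [a])
      = (lift a C1 (Function.update D' [] (D' [] + 1)), some []) := by
    rw [ystep_ge_cons (lift a C1 D') [a] (D' [] + 1) (by simp)
      (by rw [show ([a] : List (Fin 2)) = a :: [] from rfl, lift_cons_self]) hr]
    rw [show ([a] : List (Fin 2)) = a :: [] from rfl, update_lift, List.dropLast_singleton]
  refine ⟨k1' + 2, lift a C1 (Function.update D' [] (D' [] + 1)), ?_, ?_, ?_, ?_⟩
  · have h1 : ystep^[k1' + 1] (C, some []) = (lift a C1 D', some [a]) := by
      rw [Function.iterate_succ_apply, hroot, hsim]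
    rw [show k1' + 2 = (k1' + 1) + 1 from rfl, Function.iterate_succ_apply', h1, hstep2]
  · show C1 [] = _
    rw [hC1, Function.update_self]
  · rw [subC_lift_self, hnc]
  · intro b hb
    rw [subC_lift_ne _ _ hb, hC1, subC_update_root]

lemma phaseB (C : YConf) (a : Fin 2) (ha : C [] + 1 = ((a.val : ℕ) : ZMod 3))
    (hS : ¬ ychipReturns (subC a C)) :
    (∀ k, (ystep^[k] (C, some [])).2 ≠ none) ∧
    (∀ k, (ystep^[k + 1] (C, some [])).1 [] = ((a.val : ℕ) : ZMod 3)) ∧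
    (∀ w k, (ystep^[k + 1] (C, some [])).1 (a :: w) = (ystep^[k] (subC a C, some [])).1 w) ∧
    (∀ b : Fin 2, b ≠ a → ∀ w k, (ystep^[k] (C, some [])).1 (b :: w) = C (b :: w)) := by
  have hsome : ∀ k, ∃ w, ystep^[k] (subC a C, some [])
      = ((ystep^[k] (subC a C, some [])).1, some w) := by
    intro k
    rcases hs : (ystep^[k] (subC a C, some [])).2 with _ | w
    · exact absurd ⟨k, hs⟩ hS
    · exact ⟨w, Prod.ext rfl hs⟩
  set C1 := Function.update C [] ((a.val : ℕ) : ZMod 3) with hC1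
  have hroot : ystep (C, some []) = (C1, some [a]) := step_root C a ha
  have hsub1 : subC a C1 = subC a C := subC_update_root a C _
  have hsim : ∀ k, ∃ w, ystep^[k + 1] (C, some [])
      = (lift a C1 (ystep^[k] (subC a C, some [])).1, some (a :: w)) := by
    intro k
    obtain ⟨w, hw⟩ := hsome k
    refine ⟨w, ?_⟩
    rw [Function.iterate_succ_apply, hroot]
    exact sim_some a C1 k _ w (by rw [hsub1]; exact hw)
  refine ⟨?_, ?_, ?_, ?_⟩
  · intro k
    rcases k with _ | k
    · simp
    · obtain ⟨w, hw⟩ := hsim k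
      rw [hw]
      simp
  · intro k
    obtain ⟨w, hw⟩ := hsim k
    rw [hw]
    show C1 [] = _
    rw [hC1, Function.update_self]
  · intro w k
    obtain ⟨w', hw'⟩ := hsim k
    rw [hw']
    exact lift_cons_self a C1 _ w
  · intro b hb w k
    rcases k with _ | k
    · rfl
    · obtain ⟨w', hw'⟩ := hsim k
      rw [hw']
      show lift a C1 _ (b :: w) = _
      rw [lift_cons_ne _ _ _ hb, hC1, Function.update_of_ne (by simp)]

lemma returns_comp (C C' : YConf) (k0 : ℕ)
    (h : ystep^[k0] (C, some []) = (C', some [])) (m : ℕ) :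
    ystep^[k0 + m] (C, some []) = ystep^[m] (C', some []) := by
  rw [Nat.add_comm, Function.iterate_add_apply, h]

lemma ynextConf_comp (C C' : YConf) (k0 : ℕ)
    (h : ystep^[k0] (C, some []) = (C', some [])) (h' : ychipReturns C') :
    ychipReturns C ∧ ynextConf C = ynextConf C' := by
  obtain ⟨k, hk⟩ := h'
  have hfin : ystep^[k] (C', some []) = ((ystep^[k] (C', some [])).1, none) :=
    Prod.ext rfl hk
  have hp : ystep^[k0 + k] (C, some []) = ((ystep^[k] (C', some [])).1, none) := by
    rw [returns_comp C C' k0 h k, hfin]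
  exact ⟨⟨k0 + k, by rw [hp]⟩, by rw [ynextConf_of_none C _ _ hp, ynextConf_of_none C' _ _ hfin]⟩

/-! ### The six chip lemmas -/

lemma cast0 : (((0 : Fin 2).val : ℕ) : ZMod 3) = 0 := by decide
lemma cast1 : (((1 : Fin 2).val : ℕ) : ZMod 3) = 1 := by decide

lemma chip_one (C : YConf) (h1 : C [] = 1) :
    ychipReturns C ∧ ynextConf C [] = 2 ∧
      subC 0 (ynextConf C) = subC 0 C ∧ subC 1 (ynextConf C) = subC 1 C := by
  have hstep : ystep (C, some []) = (Function.update C [] 2, none) :=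
    ystep_ge_nil C 2 (by rw [h1]; decide) (by decide)
  have hk : ystep^[1] (C, some []) = (Function.update C [] 2, none) := by
    rw [Function.iterate_one]; exact hstep
  have hnc : ynextConf C = Function.update C [] 2 := ynextConf_of_none _ _ _ hk
  exact ⟨⟨1, by rw [hk]⟩, by rw [hnc, Function.update_self],
    by rw [hnc, subC_update_root], by rw [hnc, subC_update_root]⟩

lemma chipR_ret (C : YConf) (h0 : C [] = 0) (hR : ychipReturns (subC 1 C)) :
    ychipReturns C ∧ ynextConf C [] = 2 ∧
      subC 0 (ynextConf C) = subC 0 C ∧ subC 1 (ynextConf C) = ynextConf (subC 1 C) := by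
  obtain ⟨k0, C', hk0, hC'1, hC'sub1, hC'subne⟩ := phaseA C 1 (by rw [h0, cast1]; decide) hR
  have hC'root : C' [] = 1 := by rw [hC'1, cast1]
  obtain ⟨hret, hnc2, hs0, hs1⟩ := chip_one C' hC'root
  obtain ⟨hretC, hncC⟩ := ynextConf_comp C C' k0 hk0 hret
  refine ⟨hretC, by rw [hncC]; exact hnc2, ?_, ?_⟩
  · rw [hncC, hs0, hC'subne 0 (by decide)]
  · rw [hncC, hs1, hC'sub1]

lemma chipLR_ret (C : YConf) (h2 : C [] = 2) (hL : ychipReturns (subC 0 C))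
    (hR : ychipReturns (subC 1 C)) :
    ychipReturns C ∧ ynextConf C [] = 2 ∧
      subC 0 (ynextConf C) = ynextConf (subC 0 C) ∧
      subC 1 (ynextConf C) = ynextConf (subC 1 C) := by
  obtain ⟨k0, C', hk0, hC'0, hC'sub0, hC'subne⟩ := phaseA C 0 (by rw [h2, cast0]; decide) hL
  have hC'root : C' [] = 0 := by rw [hC'0, cast0]
  have hR' : ychipReturns (subC 1 C') := by rw [hC'subne 1 (by decide)]; exact hR
  obtain ⟨hret, hnc2, hs0, hs1⟩ := chipR_ret C' hC'root hR'
  obtain ⟨hretC, hncC⟩ := ynextConf_comp C C' k0 hk0 hret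
  refine ⟨hretC, by rw [hncC]; exact hnc2, ?_, ?_⟩
  · rw [hncC, hs0, hC'sub0]
  · rw [hncC, hs1, hC'subne 1 (by decide)]

lemma chipL_esc (C : YConf) (h2 : C [] = 2) (hL : ¬ ychipReturns (subC 0 C)) :
    ¬ ychipReturns C ∧ ynextConf C [] = 0 ∧
      subC 0 (ynextConf C) = ynextConf (subC 0 C) ∧ subC 1 (ynextConf C) = subC 1 C := by
  obtain ⟨h1, h2', h3, h4⟩ := phaseB C 0 (by rw [h2, cast0]; decide) hL
  refine ⟨fun ⟨k, hk⟩ => h1 k hk, ?_, ?_, ?_⟩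
  · apply ynextConf_spec C [] 0 1
    intro k hk
    obtain ⟨k', rfl⟩ : ∃ k', k = k' + 1 := ⟨k - 1, by omega⟩
    rw [h2' k', cast0]
  · funext w
    exact ynextConf_congr C (subC 0 C) (0 :: w) w 1
      (fun k => by rw [Nat.add_comm]; exact h3 w k) rfl
  · funext w
    exact ynextConf_spec C (1 :: w) (C (1 :: w)) 0 (fun k _ => h4 1 (by decide) w k)

lemma chipR_esc (C : YConf) (h0 : C [] = 0) (hR : ¬ ychipReturns (subC 1 C)) :
    ¬ ychipReturns C ∧ ynextConf C [] = 1 ∧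
      subC 0 (ynextConf C) = subC 0 C ∧ subC 1 (ynextConf C) = ynextConf (subC 1 C) := by
  obtain ⟨h1, h2', h3, h4⟩ := phaseB C 1 (by rw [h0, cast1]; decide) hR
  refine ⟨fun ⟨k, hk⟩ => h1 k hk, ?_, ?_, ?_⟩
  · apply ynextConf_spec C [] 1 1
    intro k hk
    obtain ⟨k', rfl⟩ : ∃ k', k = k' + 1 := ⟨k - 1, by omega⟩
    rw [h2' k', cast1]
  · funext w
    exact ynextConf_spec C (0 :: w) (C (0 :: w)) 0 (fun k _ => h4 0 (by decide) w k)
  · funext w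
    exact ynextConf_congr C (subC 1 C) (1 :: w) w 1
      (fun k => by rw [Nat.add_comm]; exact h3 w k) rfl

lemma chipLR_esc (C : YConf) (h2 : C [] = 2) (hL : ychipReturns (subC 0 C))
    (hR : ¬ ychipReturns (subC 1 C)) :
    ¬ ychipReturns C ∧ ynextConf C [] = 1 ∧
      subC 0 (ynextConf C) = ynextConf (subC 0 C) ∧
      subC 1 (ynextConf C) = ynextConf (subC 1 C) := by
  obtain ⟨k0, C', hk0, hC'0, hC'sub0, hC'subne⟩ := phaseA C 0 (by rw [h2, cast0]; decide) hL
  have hC'root : C' [] = 0 := by rw [hC'0, cast0]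
  have hR' : ¬ ychipReturns (subC 1 C') := by rw [hC'subne 1 (by decide)]; exact hR
  obtain ⟨h1, h2', h3, h4⟩ := phaseB C' 1 (by rw [hC'root, cast1]; decide) hR'
  have hcomp := returns_comp C C' k0 hk0
  refine ⟨?_, ?_, ?_, ?_⟩
  · rintro ⟨k, hk⟩
    by_cases hkk : k0 ≤ k
    · have : k = k0 + (k - k0) := by omega
      rw [this, hcomp] at hk
      exact h1 _ hk
    · have := snd_ne_none_of_later (C, some []) k k0 (by omega)
        (by rw [hk0]; simp)
      exact this hk
  · apply ynextConf_spec C [] 1 (k0 + 1)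
    intro k hk
    have hke : k = k0 + (k - k0 - 1 + 1) := by omega
    rw [hke, hcomp, h2' _, cast1]
  · funext w
    apply ynextConf_spec C (0 :: w) (ynextConf (subC 0 C) w) k0
    intro k hk
    have hke : k = k0 + (k - k0) := by omega
    rw [hke, hcomp, h4 0 (by decide) w _]
    show subC 0 C' w = _
    rw [hC'sub0]
  · funext w
    apply ynextConf_congr C (subC 1 C) (1 :: w) w (k0 + 1)
    · intro k
      have hke : k0 + 1 + k = k0 + (k + 1) := by omega
      rw [hke, hcomp, h3 w k]
      show (ystep^[k] (subC 1 C', some [])).1 w = _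
      rw [hC'subne 1 (by decide)]
    · rfl

/-! ### Sequence bookkeeping -/

lemma yconfSeq_zero (C : YConf) : yconfSeq C 0 = C := rfl

lemma yconfSeq_shift (C : YConf) (j : ℕ) :
    yconfSeq C (j + 1) = yconfSeq (ynextConf C) j := by
  induction j with
  | zero => rfl
  | succ j ih =>
    show ynextConf (yconfSeq C (j + 1)) = ynextConf (yconfSeq (ynextConf C) j)
    rw [ih]

lemma yescapes_zero (C : YConf) : yescapes C 0 ↔ ¬ ychipReturns C := Iff.rfl

lemma yescapes_succ (C : YConf) (j : ℕ) :
    yescapes C (j + 1) ↔ yescapes (ynextConf C) j := by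
  unfold yescapes
  rw [yconfSeq_shift]

/-! ### Main induction -/

lemma main_lemma (l : List (Bool × Bool)) :
    ∀ (C : YConf), C [] = 2 →
    (∀ (j : ℕ) (hj : j < l.length), (l[j].1 = true ↔ yescapes (subC 0 C) j)) →
    (∀ (j : ℕ) (hj : j < l.length), (l[j].2 = true ↔ yescapes (subC 1 C) j)) →
    ∀ (i : ℕ) (hi : i < (phiWord l).length), ((phiWord l)[i] = true ↔ yescapes C i) := by
  induction l with
  | nil =>
    intro C _ _ _ i hi
    simp [phiWord] at hi
  | cons p l ih =>
    intro C h2 hc hd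
    obtain ⟨c0, d0⟩ := p
    have hc0 : (c0 = true ↔ yescapes (subC 0 C) 0) := hc 0 (by simp)
    have hd0 : (d0 = true ↔ yescapes (subC 1 C) 0) := hd 0 (by simp)
    -- tail hypotheses template
    have hc' : ∀ (j : ℕ) (hj : j < l.length), (l[j].1 = true ↔ yescapes (subC 0 C) (j + 1)) := by
      intro j hj
      have := hc (j + 1) (by simp; omega)
      simpa using this
    have hd' : ∀ (j : ℕ) (hj : j < l.length), (l[j].2 = true ↔ yescapes (subC 1 C) (j + 1)) := by
      intro j hj
      have := hd (j + 1) (by simp; omega)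
      simpa using this
    rcases c0 <;> rcases d0
    -- case (false, false)
    · have hL : ychipReturns (subC 0 C) := by
        by_contra h
        exact absurd (hc0.mpr h) (by simp)
      have hR : ychipReturns (subC 1 C) := by
        by_contra h
        exact absurd (hd0.mpr h) (by simp)
      obtain ⟨hret, hH2, hH0, hH1⟩ := chipLR_ret C h2 hL hR
      show ∀ (i : ℕ) (hi : i < (false :: phiWord l).length), ((false :: phiWord l)[i] = true ↔ yescapes C i)
      intro i hi
      rcases i with _ | i
      · simp only [List.getElem_cons_zero]
        constructor
        · intro h; exact absurd h (by simp)
        · intro h; exact absurd hret h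
      · simp only [List.getElem_cons_succ]
        rw [show (i + 1 : ℕ) = i + 1 from rfl, yescapes_succ]
        apply ih (ynextConf C) hH2
        · intro j hj
          rw [hH0, ← yescapes_succ]
          exact hc' j hj
        · intro j hj
          rw [hH1, ← yescapes_succ]
          exact hd' j hj
    -- case (false, true)
    · have hL : ychipReturns (subC 0 C) := by
        by_contra h
        exact absurd (hc0.mpr h) (by simp)
      have hR : ¬ ychipReturns (subC 1 C) := hd0.mp rfl
      obtain ⟨hesc, hG1, hG0, hG1'⟩ := chipLR_esc C h2 hL hR
      obtain ⟨hret, hH2, hH0, hH1⟩ := chip_one (ynextConf C) hG1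
      show ∀ (i : ℕ) (hi : i < (true :: false :: phiWord l).length), ((true :: false :: phiWord l)[i] = true ↔ yescapes C i)
      intro i hi
      rcases i with _ | (_ | i)
      · simpa [yescapes_zero] using hesc
      · simp only [List.getElem_cons_succ, List.getElem_cons_zero]
        rw [yescapes_succ]
        constructor
        · intro h; exact absurd h (by simp)
        · intro h; exact absurd hret h
      · simp only [List.getElem_cons_succ]
        rw [yescapes_succ, yescapes_succ]
        apply ih (ynextConf (ynextConf C)) hH2
        · intro j hj
          rw [hH0, hG0, ← yescapes_succ]
          exact hc' j hj
        · intro j hj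
          rw [hH1, hG1', ← yescapes_succ]
          exact hd' j hj
    -- case (true, false)
    · have hL : ¬ ychipReturns (subC 0 C) := hc0.mp rfl
      have hR : ychipReturns (subC 1 C) := by
        by_contra h
        exact absurd (hd0.mpr h) (by simp)
      obtain ⟨hesc, hG0r, hG0, hG1⟩ := chipL_esc C h2 hL
      have hR' : ychipReturns (subC 1 (ynextConf C)) := by rw [hG1]; exact hR
      obtain ⟨hret, hH2, hH0, hH1⟩ := chipR_ret (ynextConf C) hG0r hR'
      show ∀ (i : ℕ) (hi : i < (true :: false :: phiWord l).length), ((true :: false :: phiWord l)[i] = true ↔ yescapes C i)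
      intro i hi
      rcases i with _ | (_ | i)
      · simpa [yescapes_zero] using hesc
      · simp only [List.getElem_cons_succ, List.getElem_cons_zero]
        rw [yescapes_succ]
        constructor
        · intro h; exact absurd h (by simp)
        · intro h; exact absurd hret h
      · simp only [List.getElem_cons_succ]
        rw [yescapes_succ, yescapes_succ]
        apply ih (ynextConf (ynextConf C)) hH2
        · intro j hj
          rw [hH0, hG0, ← yescapes_succ]
          exact hc' j hj
        · intro j hj
          rw [hH1, hG1, ← yescapes_succ]
          exact hd' j hj
    -- case (true, true)
    · have hL : ¬ ychipReturns (subC 0 C) := hc0.mp rfl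
      have hR : ¬ ychipReturns (subC 1 C) := hd0.mp rfl
      obtain ⟨hesc, hG0r, hG0, hG1⟩ := chipL_esc C h2 hL
      have hR' : ¬ ychipReturns (subC 1 (ynextConf C)) := by rw [hG1]; exact hR
      obtain ⟨hesc2, hG1r, hGG0, hGG1⟩ := chipR_esc (ynextConf C) hG0r hR'
      obtain ⟨hret, hH2, hH0, hH1⟩ := chip_one (ynextConf (ynextConf C)) hG1r
      show ∀ (i : ℕ) (hi : i < (true :: true :: false :: phiWord l).length), ((true :: true :: false :: phiWord l)[i] = true ↔ yescapes C i)
      intro i hi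
      rcases i with _ | (_ | (_ | i))
      · simpa [yescapes_zero] using hesc
      · simp only [List.getElem_cons_succ, List.getElem_cons_zero]
        rw [yescapes_succ]
        simpa [yescapes_zero] using hesc2
      · simp only [List.getElem_cons_succ, List.getElem_cons_zero]
        rw [yescapes_succ, yescapes_succ]
        constructor
        · intro h; exact absurd h (by simp)
        · intro h; exact absurd hret h
      · simp only [List.getElem_cons_succ]
        rw [yescapes_succ, yescapes_succ, yescapes_succ]
        apply ih (ynextConf (ynextConf (ynextConf C))) hH2
        · intro j hj
          rw [hH0, hGG0, hG0, ← yescapes_succ]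
          exact hc' j hj
        · intro j hj
          rw [hH1, hGG1, hG1, ← yescapes_succ]
          exact hd' j hj

/-- Lemma 4.4: fix a rotor configuration on the branch `Y` whose root rotor
points to `o` (direction 3, encoded by `2 : ZMod 3`).  If `c` and `d` are the
escape sequences (of any common length `m`) for the induced configurations on
the left and right sub-branches of `Y`, then `φ(c, d)` is the escape sequence
for the full branch `Y`. -/
theorem stmt14 (C0 : YConf) (hroot : C0 [] = 2) (m : ℕ) (c d : List Bool)
    (hcm : c.length = m) (hdm : d.length = m)
    (hc : ∀ j : Fin c.length,
      (c.get j = true ↔ yescapes (fun v => C0 (0 :: v)) j.val))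
    (hd : ∀ j : Fin d.length,
      (d.get j = true ↔ yescapes (fun v => C0 (1 :: v)) j.val)) :
    ∀ i : Fin (phiWord (c.zip d)).length,
      ((phiWord (c.zip d)).get i = true ↔ yescapes C0 i.val) := by
  have hzl : (c.zip d).length = m := by simp [hcm, hdm]
  have hc' : ∀ (j : ℕ) (hj : j < (c.zip d).length),
      ((c.zip d)[j].1 = true ↔ yescapes (subC 0 C0) j) := by
    intro j hj
    rw [List.getElem_zip]
    exact hc ⟨j, by omega⟩
  have hd' : ∀ (j : ℕ) (hj : j < (c.zip d).length),
      ((c.zip d)[j].2 = true ↔ yescapes (subC 1 C0) j) := by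
    intro j hj
    rw [List.getElem_zip]
    exact hd ⟨j, by omega⟩
  intro ⟨i, hi⟩
  simp only [List.get_eq_getElem]
  exact main_lemma (c.zip d) C0 hroot hc' hd' i hi
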